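/- Let ε = Σ_{β ∈ Ψ⁺} β be the sum of all positive roots of Φ lying in the linear span of {α_j : j ∈ S}, and set p_i := −2⟨ε, α_i⟩/⟨α_i, α_i⟩ for i ∉ S. Suppose k ∈ span Φ satisfies ⟨λ_i, k⟩ ≥ 0 for all i = 1, …, r and ⟨α_j, k⟩ ≤ 0 for all j ∈ S. Then 0 ≤ 2 Σ_{j ∈ S} ⟨λ_j, k⟩ ≤ Σ_{i ∉ S} p_i ⟨λ_i, k⟩. -/

import Mathlib

open RealInnerProductSpace
open scoped Classical

/-- The reflection in the hyperplane orthogonal to `a`: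
`σ_a(v) = v − (2⟨v,a⟩/⟨a,a⟩) a`. -/
noncomputable def reflect {V : Type*} [NormedAddCommGroup V] [InnerProductSpace ℝ V]
    (a v : V) : V :=
  v - (2 * ⟪v, a⟫ / ⟪a, a⟫) • a

/-- `Φ` is a reduced crystallographic root system with simple roots `α 0, …, α (r-1)`. -/
structure RootSystemData (V : Type*) [NormedAddCommGroup V] [InnerProductSpace ℝ V]
    {r : ℕ} (Φ : Finset V) (α : Fin r → V) : Prop where
  nonzero : ∀ β ∈ Φ, β ≠ 0
  simple_mem : ∀ i, α i ∈ Φ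
  indep : LinearIndependent ℝ α
  int_comb : ∀ β ∈ Φ, ∃ c : Fin r → ℤ,
      β = ∑ i, (c i : ℝ) • α i ∧ ((∀ i, 0 ≤ c i) ∨ (∀ i, c i ≤ 0))
  reflect_mem : ∀ β ∈ Φ, ∀ γ ∈ Φ, reflect β γ ∈ Φ
  cartan_int : ∀ β ∈ Φ, ∀ γ ∈ Φ, ∃ n : ℤ, 2 * ⟪γ, β⟫ / ⟪β, β⟫ = (n : ℝ)

/-- `β` is a positive root: a nonnegative integer combination of the simple roots. -/
def IsPosRoot {V : Type*} [NormedAddCommGroup V] [InnerProductSpace ℝ V]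
    {r : ℕ} (α : Fin r → V) (β : V) : Prop :=
  ∃ c : Fin r → ℤ, β = ∑ i, (c i : ℝ) • α i ∧ ∀ i, 0 ≤ c i

/-- The result of applying the word of reflections `σ_{α i}`, `i ∈ l`, to `k`. -/
noncomputable def wordApply {V : Type*} [NormedAddCommGroup V] [InnerProductSpace ℝ V]
    {r : ℕ} (α : Fin r → V) (l : List (Fin r)) (k : V) : V :=
  l.foldr (fun i w => reflect (α i) w) k

section Aux

variable {V : Type*} [NormedAddCommGroup V] [InnerProductSpace ℝ V]

lemma inner_reflect_aux (a v : V) (h : ⟪a, a⟫ ≠ (0:ℝ)) : ⟪reflect a v, a⟫ = -⟪v, a⟫ := by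
  simp only [reflect, inner_sub_left, real_inner_smul_left]
  field_simp
  ring

lemma reflect_reflect_aux (a v : V) (h : ⟪a, a⟫ ≠ (0:ℝ)) : reflect a (reflect a v) = v := by
  simp only [reflect, inner_sub_left, real_inner_smul_left]
  field_simp
  module

lemma coeff_unique_aux {r : ℕ} {α : Fin r → V} (hind : LinearIndependent ℝ α)
    {b c : Fin r → ℝ} (h : ∑ i, b i • α i = ∑ i, c i • α i) : b = c := by
  funext i
  have := Fintype.linearIndependent_iff.mp hind (fun i => b i - c i) ?_ i
  · linarith
  · simp [sub_smul, Finset.sum_sub_distrib, h]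

lemma span_extract_aux {r : ℕ} {α : Fin r → V} (hinj : Function.Injective α)
    (S : Finset (Fin r)) {β : V} (h : β ∈ Submodule.span ℝ (α '' (S : Set (Fin r)))) :
    ∃ e : Fin r → ℝ, (∀ i ∉ S, e i = 0) ∧ β = ∑ i, e i • α i := by
  classical
  have himg : α '' (S : Set (Fin r)) = ((S.image α : Finset V) : Set V) := by
    simp [Finset.coe_image]
  rw [himg] at h
  obtain ⟨f, -, hf⟩ := Submodule.mem_span_finset.mp h
  rw [Finset.sum_image (fun x _ y _ hxy => hinj hxy)] at hf
  refine ⟨fun i => if i ∈ S then f (α i) else 0, fun i hi => by simp [hi], ?_⟩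
  rw [← hf]
  simp only [ite_smul, zero_smul]
  rw [Finset.sum_ite_mem, Finset.univ_inter]

end Aux

/-- With `ε` the sum of the positive roots lying in the span of
`{α j : j ∈ S}` and `p i := −2⟨ε, α i⟩/⟨α i, α i⟩` for `i ∉ S`: if `k ∈ span Φ`
satisfies `⟨λ i, k⟩ ≥ 0` for all `i` and `⟨α j, k⟩ ≤ 0` for all `j ∈ S`, then
`0 ≤ 2 Σ_{j ∈ S} ⟨λ j, k⟩ ≤ Σ_{i ∉ S} p i ⟨λ i, k⟩`. -/
theorem holomorphic_charge_bound
    {V : Type*} [NormedAddCommGroup V] [InnerProductSpace ℝ V] [FiniteDimensional ℝ V]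
    {r : ℕ} (Φ : Finset V) (α : Fin r → V) (hΦ : RootSystemData V Φ α)
    (lam : Fin r → V)
    (hlam_mem : ∀ j, lam j ∈ Submodule.span ℝ (Φ : Set V))
    (hlam : ∀ i j, 2 * ⟪α i, lam j⟫ / ⟪α i, α i⟫ = if i = j then 1 else 0)
    (S : Finset (Fin r))
    (Ψplus : Finset V)
    (hΨ : Ψplus = Φ.filter (fun β => IsPosRoot α β ∧
      β ∈ Submodule.span ℝ (α '' (S : Set (Fin r)))))
    (ε : V) (hε : ε = ∑ β ∈ Ψplus, β)
    (p : Fin r → ℝ) (hp : ∀ i, p i = -(2 * ⟪ε, α i⟫ / ⟪α i, α i⟫))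
    (k : V) (hk : k ∈ Submodule.span ℝ (Φ : Set V))
    (hpos : ∀ i, 0 ≤ ⟪lam i, k⟫)
    (hneg : ∀ j ∈ S, ⟪α j, k⟫ ≤ 0) :
    0 ≤ 2 * ∑ j ∈ S, ⟪lam j, k⟫ ∧
    2 * ∑ j ∈ S, ⟪lam j, k⟫ ≤ ∑ i ∈ Sᶜ, p i * ⟪lam i, k⟫ := by
  classical
  have hinj : Function.Injective α := hΦ.indep.injective
  have haa : ∀ i, (0:ℝ) < ⟪α i, α i⟫ := fun i => by
    have h1 : ⟪α i, α i⟫ ≠ (0:ℝ) := inner_self_ne_zero.mpr (hΦ.nonzero _ (hΦ.simple_mem i))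
    exact lt_of_le_of_ne real_inner_self_nonneg (Ne.symm h1)
  have haane : ∀ i, ⟪α i, α i⟫ ≠ (0:ℝ) := fun i => (haa i).ne'
  -- inner products of simple roots with fundamental weights
  have hal : ∀ i j, ⟪α i, lam j⟫ = if i = j then ⟪α i, α i⟫ / 2 else 0 := by
    intro i j
    have h := hlam i j
    have hne := haane i
    by_cases hij : i = j
    · rw [if_pos hij] at h ⊢
      field_simp at h
      linarith
    · rw [if_neg hij] at h ⊢
      field_simp at h
      linarith
  -- express k in the basis of simple roots
  have hspan : (Φ : Set V) ⊆ (Submodule.span ℝ (Set.range α) : Set V) := by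
    intro β hβ
    obtain ⟨c, hc, -⟩ := hΦ.int_comb β hβ
    rw [hc]
    exact Submodule.sum_mem _ fun i _ =>
      Submodule.smul_mem _ _ (Submodule.subset_span ⟨i, rfl⟩)
  obtain ⟨d, hd⟩ := (Submodule.mem_span_range_iff_exists_fun ℝ).mp
    (Submodule.span_le.mpr hspan hk)
  have hlamk : ∀ j, ⟪lam j, k⟫ = d j * (⟪α j, α j⟫ / 2) := by
    intro j
    rw [real_inner_comm, ← hd, sum_inner]
    have : ∀ i, ⟪d i • α i, lam j⟫ = if i = j then d i * (⟪α i, α i⟫ / 2) else 0 := by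
      intro i
      rw [real_inner_smul_left, hal i j]
      split <;> simp
    simp only [this]
    simp
  set A : Fin r → ℝ := fun i => 2 * ⟪ε, α i⟫ / ⟪α i, α i⟫ with hA
  have hepsk : ⟪ε, k⟫ = ∑ i, A i * ⟪lam i, k⟫ := by
    have h1 : ⟪ε, k⟫ = ∑ i, d i * ⟪ε, α i⟫ := by
      rw [← hd, inner_sum]
      simp [real_inner_smul_right]
    rw [h1]
    refine Finset.sum_congr rfl fun i _ => ?_
    rw [hlamk i, hA]
    have := haane i
    field_simp
  -- facts about roots in Ψplus
  have hΨmem : ∀ β ∈ Ψplus, β ∈ Φ ∧ IsPosRoot α β ∧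
      β ∈ Submodule.span ℝ (α '' (S : Set (Fin r))) := by
    intro β hβ
    rw [hΨ, Finset.mem_filter] at hβ
    tauto
  have hcoeff : ∀ β ∈ Ψplus, ∃ c : Fin r → ℤ,
      β = ∑ i, (c i : ℝ) • α i ∧ (∀ i, 0 ≤ c i) ∧ (∀ i ∉ S, c i = 0) := by
    intro β hβ
    obtain ⟨hβΦ, ⟨c, hc, hc0⟩, hβspan⟩ := hΨmem β hβ
    obtain ⟨e, he0, hee⟩ := span_extract_aux hinj S hβspan
    have hce : (fun i => (c i : ℝ)) = e := coeff_unique_aux hΦ.indep (by rw [← hc, ← hee])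
    refine ⟨c, hc, hc0, fun i hi => ?_⟩
    have h1 : (c i : ℝ) = 0 := by rw [congrFun hce i, he0 i hi]
    exact_mod_cast h1
  -- ⟪ε, k⟫ ≤ 0
  have hepsneg : ⟪ε, k⟫ ≤ 0 := by
    rw [hε, sum_inner]
    apply Finset.sum_nonpos
    intro β hβ
    obtain ⟨c, hc, hc0, hcS⟩ := hcoeff β hβ
    rw [hc, sum_inner]
    apply Finset.sum_nonpos
    intro i _
    rw [real_inner_smul_left]
    by_cases hi : i ∈ S
    · exact mul_nonpos_of_nonneg_of_nonpos (by exact_mod_cast hc0 i) (hneg i hi)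
    · simp [hcS i hi]
  -- 2 ≤ A j for j ∈ S
  have hA2 : ∀ j ∈ S, 2 ≤ A j := by
    intro j hj
    set a := α j with ha
    set M := Ψplus.filter (fun β => ∃ m : ℝ, β = m • a) with hM
    have hMsub : M ⊆ Ψplus := Finset.filter_subset _ _
    have haΨ : a ∈ Ψplus := by
      rw [hΨ, Finset.mem_filter]
      refine ⟨hΦ.simple_mem j, ⟨fun i => if i = j then 1 else 0, ?_, fun i => by
        by_cases h : i = j <;> simp [h]⟩, Submodule.subset_span ⟨j, hj, rfl⟩⟩
      have h1 : ∀ i : Fin r, (((if i = j then 1 else 0 : ℤ) : ℝ)) • α i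
          = if i = j then α i else 0 := by intro i; split <;> simp
      simp only [h1]
      simp [ha]
    have haM : a ∈ M := by
      rw [hM, Finset.mem_filter]
      exact ⟨haΨ, 1, (one_smul ℝ a).symm⟩
    -- each β ∈ M has ⟪β, a⟫ ≥ ⟪a, a⟫
    have hMinner : ∀ β ∈ M, ⟪a, a⟫ ≤ ⟪β, a⟫ := by
      intro β hβM
      rw [hM, Finset.mem_filter] at hβM
      obtain ⟨hβΨ, m, hm⟩ := hβM
      obtain ⟨c, hc, hc0, -⟩ := hcoeff β hβΨ
      have hma : (m : ℝ) • a = ∑ i, (if i = j then m else 0) • α i := by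
        simp only [ite_smul, zero_smul, Finset.sum_ite_eq', Finset.mem_univ, if_true, ha]
      have hce : (fun i => (c i : ℝ)) = fun i => if i = j then m else 0 :=
        coeff_unique_aux hΦ.indep (by rw [← hc, ← hma, ← hm])
      have hcj : (c j : ℝ) = m := by simpa using congrFun hce j
      have hβ0 : β ≠ 0 := hΦ.nonzero β (hΨmem β hβΨ).1
      have hm0 : m ≠ 0 := by
        intro h0
        apply hβ0
        rw [hm, h0, zero_smul]
      have hm1 : (1:ℝ) ≤ m := by
        have hcj0 : c j ≠ 0 := by
          intro h0; apply hm0; rw [← hcj, h0]; simp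
        have : 1 ≤ c j := lt_of_le_of_ne (hc0 j) (Ne.symm hcj0)
        rw [← hcj]
        exact_mod_cast this
      rw [hm, real_inner_smul_left]
      nlinarith [haa j]
    -- reflection in a maps Ψplus \ M to itself
    have hrefl : ∀ β ∈ Ψplus \ M, reflect a β ∈ Ψplus \ M := by
      intro β hβ
      rw [Finset.mem_sdiff] at hβ
      obtain ⟨hβΨ, hβnM⟩ := hβ
      have hβΦ : β ∈ Φ := (hΨmem β hβΨ).1
      have hβspan := (hΨmem β hβΨ).2.2
      obtain ⟨c, hc, hc0, hcS⟩ := hcoeff β hβΨ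
      have hnotmul : ¬ ∃ m : ℝ, β = m • a := by
        intro hmul
        apply hβnM
        rw [hM, Finset.mem_filter]
        exact ⟨hβΨ, hmul⟩
      -- some coefficient away from j is nonzero
      obtain ⟨i₀, hi₀j, hi₀⟩ : ∃ i₀, i₀ ≠ j ∧ c i₀ ≠ 0 := by
        by_contra hcon
        push_neg at hcon
        apply hnotmul
        refine ⟨(c j : ℝ), ?_⟩
        rw [hc, Finset.sum_eq_single j (fun i _ hij => by rw [hcon i hij]; simp)
          (fun h => absurd (Finset.mem_univ j) h), ha]
      have hci₀ : 1 ≤ c i₀ := lt_of_le_of_ne (hc0 i₀) (Ne.symm hi₀)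
      obtain ⟨n, hn⟩ := hΦ.cartan_int a (hΦ.simple_mem j) β hβΦ
      have hrβ : reflect a β = ∑ i, ((c i : ℝ) - if i = j then (n:ℝ) else 0) • α i := by
        have hna : (n : ℝ) • a = ∑ i, (if i = j then (n:ℝ) else 0) • α i := by
          simp only [ite_smul, zero_smul, Finset.sum_ite_eq', Finset.mem_univ, if_true, ha]
        simp only [reflect, hn]
        rw [hc, hna, ← Finset.sum_sub_distrib]
        exact Finset.sum_congr rfl fun i _ => by rw [sub_smul]
      have hrΦ : reflect a β ∈ Φ := hΦ.reflect_mem a (hΦ.simple_mem j) β hβΦ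
      obtain ⟨e, he, hesign⟩ := hΦ.int_comb _ hrΦ
      have hde : (fun i => (e i : ℝ)) = fun i => (c i : ℝ) - if i = j then (n:ℝ) else 0 :=
        coeff_unique_aux hΦ.indep (by rw [← he, ← hrβ])
      have hei₀ : (e i₀ : ℝ) = (c i₀ : ℝ) := by
        have h1 := congrFun hde i₀
        simp only [if_neg hi₀j, sub_zero] at h1
        exact h1
      have hei₀pos : 0 < e i₀ := by
        have h1 : (1:ℝ) ≤ (e i₀ : ℝ) := by
          rw [hei₀]; exact_mod_cast hci₀
        exact_mod_cast lt_of_lt_of_le zero_lt_one h1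
      have hepos : ∀ i, 0 ≤ e i := by
        rcases hesign with h | h
        · exact h
        · exact absurd (h i₀) (not_le.mpr hei₀pos)
      have hrspan : reflect a β ∈ Submodule.span ℝ (α '' (S : Set (Fin r))) := by
        simp only [reflect]
        exact Submodule.sub_mem _ hβspan
          (Submodule.smul_mem _ _ (Submodule.subset_span ⟨j, hj, rfl⟩))
      have hrΨ : reflect a β ∈ Ψplus := by
        rw [hΨ, Finset.mem_filter]
        exact ⟨hrΦ, ⟨e, he, hepos⟩, hrspan⟩
      have hrnM : reflect a β ∉ M := by
        intro hmem
        rw [hM, Finset.mem_filter] at hmem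
        obtain ⟨-, m, hm⟩ := hmem
        have hma : (m : ℝ) • a = ∑ i, (if i = j then m else 0) • α i := by
          simp only [ite_smul, zero_smul, Finset.sum_ite_eq', Finset.mem_univ, if_true, ha]
        have hee : (fun i => (e i : ℝ)) = fun i => if i = j then m else 0 :=
          coeff_unique_aux hΦ.indep (by rw [← he, ← hma, ← hm])
        have : (e i₀ : ℝ) = 0 := by simpa [hi₀j] using congrFun hee i₀
        rw [hei₀] at this
        have : c i₀ = 0 := by exact_mod_cast this
        exact hi₀ this
      rw [Finset.mem_sdiff]
      exact ⟨hrΨ, hrnM⟩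
    -- the sum over Ψplus \ M vanishes
    have hsum0 : ∑ β ∈ Ψplus \ M, ⟪β, a⟫ = 0 := by
      have hrinv : ∀ β ∈ Ψplus \ M, reflect a (reflect a β) = β :=
        fun β _ => reflect_reflect_aux a β (haane j)
      have hbij : ∑ β ∈ Ψplus \ M, ⟪reflect a β, a⟫ = ∑ β ∈ Ψplus \ M, ⟪β, a⟫ :=
        Finset.sum_nbij' (fun β => reflect a β) (fun β => reflect a β)
          hrefl hrefl hrinv hrinv (fun β _ => rfl)
      have hneg' : ∑ β ∈ Ψplus \ M, ⟪reflect a β, a⟫ = -∑ β ∈ Ψplus \ M, ⟪β, a⟫ := by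
        rw [← Finset.sum_neg_distrib]
        exact Finset.sum_congr rfl fun β _ => inner_reflect_aux a β (haane j)
      linarith [hbij, hneg']
    have hea : ⟪a, a⟫ ≤ ⟪ε, a⟫ := by
      rw [hε, sum_inner, ← Finset.sum_sdiff hMsub, hsum0, zero_add]
      exact Finset.single_le_sum
        (fun β hβ => le_trans (le_of_lt (haa j)) (hMinner β hβ)) haM
    rw [hA]
    rw [le_div_iff₀ (haa j)]
    linarith [hea]
  -- conclusion
  have hAp : ∀ i, p i = -A i := fun i => by rw [hp, hA]
  have hsum_nonneg : 0 ≤ ∑ j ∈ S, ⟪lam j, k⟫ :=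
    Finset.sum_nonneg fun j _ => hpos j
  refine ⟨by linarith, ?_⟩
  have hsplit : ∑ i, A i * ⟪lam i, k⟫
      = ∑ j ∈ S, A j * ⟪lam j, k⟫ + ∑ i ∈ Sᶜ, A i * ⟪lam i, k⟫ :=
    (Finset.sum_add_sum_compl S _).symm
  have h1 : ∑ j ∈ S, 2 * ⟪lam j, k⟫ ≤ ∑ j ∈ S, A j * ⟪lam j, k⟫ :=
    Finset.sum_le_sum fun j hj => mul_le_mul_of_nonneg_right (hA2 j hj) (hpos j)
  have h2 : ∑ i ∈ Sᶜ, p i * ⟪lam i, k⟫ = -∑ i ∈ Sᶜ, A i * ⟪lam i, k⟫ := by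
    rw [← Finset.sum_neg_distrib]
    exact Finset.sum_congr rfl fun i _ => by rw [hAp i, neg_mul]
  have h3 : ∑ i, A i * ⟪lam i, k⟫ ≤ 0 := hepsk ▸ hepsneg
  rw [Finset.mul_sum]
  rw [h2]
  linarith [hsplit, h1, h3]
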